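/- arXiv:2306.13718 — 7 statements merged into one kernel-verified Lean document; each statement's English description precedes it below -/
import Mathlib

section
/- Let p be a prime, α, β ∈ F_{p^n}, γ ∈ F_{p^n} with γ ≠ 0, and define the map 𝓛 : F_{p^n} × F_{p^n} → F_{p^n} × F_{p^n} by 𝓛(x,y) = (x + γ·Tr(αx + βy), y), where Tr is the absolute trace to F_p and γ·Tr(αx+βy) means scalar multiplication of γ by the element Tr(αx+βy) of F_p. Then 𝓛 is an F_p-linear bijection of F_{p^n} × F_{p^n} if and only if Tr(αγ) ≠ -1. -/
/-- The map `𝓛(x,y) = (x + γ·Tr(αx + βy), y)` is an `F_p`-linear bijection iff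
`Tr(αγ) ≠ -1`. -/
theorem twist_map_bijective_iff
    (p n : ℕ) [Fact p.Prime]
    (α β γ : GaloisField p n) (hγ : γ ≠ 0) :
    (IsLinearMap (ZMod p)
        (fun q : GaloisField p n × GaloisField p n =>
          (q.1 + Algebra.trace (ZMod p) (GaloisField p n) (α * q.1 + β * q.2) • γ, q.2))
      ∧ Function.Bijective
        (fun q : GaloisField p n × GaloisField p n =>
          (q.1 + Algebra.trace (ZMod p) (GaloisField p n) (α * q.1 + β * q.2) • γ, q.2)))
      ↔ Algebra.trace (ZMod p) (GaloisField p n) (α * γ) ≠ -1 := by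
  set T := Algebra.trace (ZMod p) (GaloisField p n) with hT
  have hlin : IsLinearMap (ZMod p)
      (fun q : GaloisField p n × GaloisField p n =>
        (q.1 + T (α * q.1 + β * q.2) • γ, q.2)) := by
    constructor
    · intro q r
      simp only [Prod.fst_add, Prod.snd_add, Prod.mk_add_mk, Prod.mk.injEq]
      constructor
      · rw [mul_add, mul_add, show α * q.1 + α * r.1 + (β * q.2 + β * r.2)
            = (α * q.1 + β * q.2) + (α * r.1 + β * r.2) by ring, map_add, add_smul]
        ring_nf
      · trivial
    · intro c q
      simp only [Prod.smul_fst, Prod.smul_snd, Prod.smul_mk, Prod.mk.injEq]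
      constructor
      · rw [mul_smul_comm, mul_smul_comm, ← smul_add, map_smul,
          smul_eq_mul, mul_smul, smul_add]
      · trivial
  constructor
  · rintro ⟨-, hbij⟩ hcontra
    have h0 : (fun q : GaloisField p n × GaloisField p n =>
        (q.1 + T (α * q.1 + β * q.2) • γ, q.2)) (γ, 0)
        = (fun q : GaloisField p n × GaloisField p n =>
        (q.1 + T (α * q.1 + β * q.2) • γ, q.2)) (0, 0) := by
      simp [hcontra]
    exact hγ (by simpa using congrArg Prod.fst (hbij.injective h0))
  · intro hne
    refine ⟨hlin, ?_⟩
    let L := IsLinearMap.mk' _ hlin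
    have hinj : Function.Injective L := by
      rw [injective_iff_map_eq_zero]
      intro q hq
      have h2 : q.2 = 0 := congrArg Prod.snd hq
      have h1 : q.1 + T (α * q.1 + β * q.2) • γ = 0 := congrArg Prod.fst hq
      rw [h2, mul_zero, add_zero] at h1
      set c := T (α * q.1) with hc
      have hx : q.1 = (-c) • γ := by
        rw [neg_smul, eq_neg_iff_add_eq_zero]; exact h1
      have hceq : c = -c * T (α * γ) := by
        rw [hc]
        conv_lhs => rw [hx]
        rw [mul_smul_comm, map_smul, smul_eq_mul]
      have : c * (1 + T (α * γ)) = 0 := by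
        have := hceq
        ring_nf
        ring_nf at this
        linear_combination this
      have hfac : (1 + T (α * γ)) ≠ 0 := fun h => hne (by linear_combination h)
      have hc0 : c = 0 := by
        rcases mul_eq_zero.mp this with h | h
        · exact h
        · exact absurd h hfac
      have : q.1 = 0 := by rw [hx, hc0, neg_zero, zero_smul]
      exact Prod.ext this h2
    have : Function.Surjective L := LinearMap.injective_iff_surjective.mp hinj
    exact ⟨hinj, this⟩
end

section
/- Let p be a prime and F : F_{p^n} → F_{p^n} a function such that γ ∈ F_{p^n}, γ ≠ 0, is a 0-linear structure of Tr(βF) for some β ≠ 0, i.e., Tr(β(F(x+γ) - F(x))) = 0 for all x ∈ F_{p^n}. Let α ∈ F_{p^n} satisfy Tr(αγ) = -2, and define H(x) = x + γ·Tr(αx + βF(x)). Then H is an involution: H(H(x)) = x for all x ∈ F_{p^n}. -/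
/-- If `γ ≠ 0` is a `0`-linear structure of `Tr(βF)` and `Tr(αγ) = -2`, then
`H(x) = x + γ·Tr(αx + βF(x))` is an involution. -/
theorem twist_involution
    (p n : ℕ) [Fact p.Prime]
    (F : GaloisField p n → GaloisField p n)
    (α β γ : GaloisField p n) (hγ : γ ≠ 0) (hβ : β ≠ 0)
    (hls : ∀ x, Algebra.trace (ZMod p) (GaloisField p n) (β * (F (x + γ) - F x)) = 0)
    (hα : Algebra.trace (ZMod p) (GaloisField p n) (α * γ) = -2) :
    ∀ x : GaloisField p n,
      (fun y => y + Algebra.trace (ZMod p) (GaloisField p n) (α * y + β * F y) • γ)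
        ((fun y => y + Algebra.trace (ZMod p) (GaloisField p n) (α * y + β * F y) • γ) x)
        = x := by
  set Tr := Algebra.trace (ZMod p) (GaloisField p n) with hTr
  -- translator for all natural multiples of γ
  have key : ∀ (x : GaloisField p n) (k : ℕ), Tr (β * (F (x + k • γ) - F x)) = 0 := by
    intro x k
    induction k with
    | zero => simp
    | succ k ih =>
      have h0 : x + (k + 1) • γ = (x + k • γ) + γ := by rw [succ_nsmul]; ring
      have h1 : β * (F ((x + k • γ) + γ) - F x)
          = β * (F ((x + k • γ) + γ) - F (x + k • γ)) + β * (F (x + k • γ) - F x) := by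
        ring
      rw [h0, h1, map_add, hls, ih, add_zero]
  intro x
  simp only []
  set t := Tr (α * x + β * F x) with ht
  have hsmul : t • γ = (t.val : ℕ) • γ := by
    rw [← Nat.cast_smul_eq_nsmul (ZMod p), ZMod.natCast_val, ZMod.cast_id]
  have hF : Tr (β * (F (x + t • γ) - F x)) = 0 := by
    rw [hsmul]; exact key x t.val
  have expand : α * (x + t • γ) + β * F (x + t • γ)
      = (α * x + β * F x) + t • (α * γ) + β * (F (x + t • γ) - F x) := by
    rw [mul_add, mul_smul_comm, mul_sub]
    abel
  have h2 : Tr (α * (x + t • γ) + β * F (x + t • γ)) = t + t * (-2) := by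
    rw [expand, map_add, map_add, hF, add_zero, map_smul, ← ht, hα, smul_eq_mul]
  rw [h2]
  have h3 : t + t * (-2) = -t := by ring
  rw [h3, add_assoc, ← add_smul, add_neg_cancel, zero_smul, add_zero]
end

section
/- Under the hypotheses: p prime, F : F_{p^n} → F_{p^n}, β, γ ∈ F_{p^n} nonzero with Tr(β(F(x+γ)-F(x))) = 0 for all x, α ∈ F_{p^n} with Tr(αγ) = -2 (so in particular Tr(αγ) ≠ -1), and H(x) = x + γ·Tr(αx + βF(x)): the functions F and F∘H are CCZ-equivalent; explicitly, the F_p-linear bijection 𝓛(x,y) = (x + γ·Tr(αx + βy), y) of F_{p^n} × F_{p^n} maps the graph {(x, F(x)) : x ∈ F_{p^n}} onto the graph {(x, (F∘H)(x)) : x ∈ F_{p^n}}. -/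
private lemma twist_shift_nat
    (p n : ℕ) [Fact p.Prime]
    (F : GaloisField p n → GaloisField p n) (β γ : GaloisField p n)
    (hls : ∀ x, Algebra.trace (ZMod p) (GaloisField p n) (β * (F (x + γ) - F x)) = 0) :
    ∀ (k : ℕ) (x : GaloisField p n),
      Algebra.trace (ZMod p) (GaloisField p n) (β * F (x + k • γ))
        = Algebra.trace (ZMod p) (GaloisField p n) (β * F x) := by
  intro k
  induction k with
  | zero => simp
  | succ k ih =>
    intro x
    have h := hls (x + k • γ)
    rw [mul_sub, map_sub, sub_eq_zero] at h
    rw [succ_nsmul, ← add_assoc, h, ih]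

private lemma twist_shift
    (p n : ℕ) [Fact p.Prime]
    (F : GaloisField p n → GaloisField p n) (β γ : GaloisField p n)
    (hls : ∀ x, Algebra.trace (ZMod p) (GaloisField p n) (β * (F (x + γ) - F x)) = 0)
    (c : ZMod p) (x : GaloisField p n) :
    Algebra.trace (ZMod p) (GaloisField p n) (β * F (x + c • γ))
      = Algebra.trace (ZMod p) (GaloisField p n) (β * F x) := by
  have hc : c • γ = (c.val : ℕ) • γ := by
    rw [← Nat.cast_smul_eq_nsmul (ZMod p), ZMod.natCast_val, ZMod.cast_id]
  rw [hc]
  exact twist_shift_nat p n F β γ hls c.val x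

/-- Under the linear-structure hypotheses, the linear bijection
`𝓛(x,y) = (x + γ·Tr(αx+βy), y)` maps the graph of `F` onto the graph of `F ∘ H`,
so `F` and `F ∘ H` are CCZ-equivalent. -/
theorem twist_CCZ_equiv
    (p n : ℕ) [Fact p.Prime]
    (F : GaloisField p n → GaloisField p n)
    (α β γ : GaloisField p n) (hγ : γ ≠ 0) (hβ : β ≠ 0)
    (hls : ∀ x, Algebra.trace (ZMod p) (GaloisField p n) (β * (F (x + γ) - F x)) = 0)
    (hα : Algebra.trace (ZMod p) (GaloisField p n) (α * γ) = -2) :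
    Function.Bijective
      (fun q : GaloisField p n × GaloisField p n =>
        (q.1 + Algebra.trace (ZMod p) (GaloisField p n) (α * q.1 + β * q.2) • γ, q.2))
    ∧ (fun q : GaloisField p n × GaloisField p n =>
        (q.1 + Algebra.trace (ZMod p) (GaloisField p n) (α * q.1 + β * q.2) • γ, q.2)) ''
        {q : GaloisField p n × GaloisField p n | q.2 = F q.1}
      = {q : GaloisField p n × GaloisField p n |
          q.2 = F ((fun y => y + Algebra.trace (ZMod p) (GaloisField p n) (α * y + β * F y) • γ) q.1)} := by
  set T : GaloisField p n →ₗ[ZMod p] ZMod p := Algebra.trace (ZMod p) (GaloisField p n) with hT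
  -- trace of the shifted α part
  have halpha : ∀ (x : GaloisField p n) (s : ZMod p) (y : GaloisField p n),
      T (α * (x + s • γ) + β * y) = T (α * x + β * y) + s * T (α * γ) := by
    intro x s y
    rw [mul_add, mul_smul_comm, add_right_comm, map_add, map_smul, smul_eq_mul]
  -- key: the trace functional at a shifted point negates
  have key : ∀ x : GaloisField p n,
      T (α * (x + T (α * x + β * F x) • γ) + β * F (x + T (α * x + β * F x) • γ))
        = - T (α * x + β * F x) := by
    intro x
    set t := T (α * x + β * F x) with ht
    have h1 : T (α * (x + t • γ) + β * F (x + t • γ))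
        = T (α * (x + t • γ) + β * F x) := by
      rw [map_add, map_add, twist_shift p n F β γ hls t x]
    rw [h1, halpha, hα]
    ring
  -- L∘L = id
  have hLL : Function.Involutive
      (fun q : GaloisField p n × GaloisField p n =>
        (q.1 + T (α * q.1 + β * q.2) • γ, q.2)) := by
    intro q
    simp only
    set t := T (α * q.1 + β * q.2) with ht
    have h2 : T (α * (q.1 + t • γ) + β * q.2) = -t := by
      rw [halpha, hα, ← ht]; ring
    rw [h2]
    ext
    · simp [add_assoc, ← add_smul]
    · rfl
  -- H∘H = id
  have hHH : ∀ x : GaloisField p n,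
      (x + T (α * x + β * F x) • γ)
        + T (α * (x + T (α * x + β * F x) • γ)
            + β * F (x + T (α * x + β * F x) • γ)) • γ = x := by
    intro x
    rw [key x, add_assoc, ← add_smul, add_neg_cancel, zero_smul, add_zero]
  refine ⟨hLL.bijective, ?_⟩
  ext ⟨u, v⟩
  simp only [Set.mem_image, Set.mem_setOf_eq]
  constructor
  · rintro ⟨⟨x, y⟩, hy, huv⟩
    simp only at hy
    subst hy
    obtain ⟨hu, hv⟩ := Prod.mk.injEq .. ▸ huv
    simp only at hu hv
    subst hv
    -- u = x + t•γ, v = F x ; show v = F (H u)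
    rw [← hu, key x, add_assoc, ← add_smul, add_neg_cancel, zero_smul, add_zero]
  · intro hv
    refine ⟨(u + T (α * u + β * F u) • γ, F (u + T (α * u + β * F u) • γ)), rfl, ?_⟩
    simp only
    rw [hHH u, ← hv]
end

section
/- Let F : F_{p^n} → F_{p^n} be a quadratic function written as F(x) = F_DO(x) + F_ℓ(x) + F(0), where F_DO(x) = Σ_{i≤j} a_{i,j} x^{p^i + p^j} is the Dembowski–Ostrom part and F_ℓ is linear. Let H(x) = x + γ·ε(x) with ε(x) = Tr(αx + βF(x)) ∈ F_p and α, β, γ ∈ F_{p^n}. Then for all x, F(H(x)) = F(x) + ε(x)·D_γF(x) + F_DO(γ)·(ε(x)² - ε(x)), where D_γF(x) = F(x+γ) - F(x). In particular if p = 2 the last term vanishes since ε² = ε in F_2. -/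
open scoped BigOperators

section Aux

variable {p n : ℕ} [Fact p.Prime]

private lemma mon_expand (i j : ℕ) (e x γ : GaloisField p n)
    (he : ∀ k : ℕ, e ^ p ^ k = e) :
    (x + e * γ) ^ (p ^ i + p ^ j)
      = x ^ (p ^ i + p ^ j) + e * ((x + γ) ^ (p ^ i + p ^ j) - x ^ (p ^ i + p ^ j))
        + (e ^ 2 - e) * γ ^ (p ^ i + p ^ j) := by
  rw [pow_add, pow_add, pow_add, add_pow_char_pow, add_pow_char_pow, add_pow_char_pow,
    add_pow_char_pow, mul_pow, mul_pow, he, he]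
  ring

private lemma fdo_expand (FDO : GaloisField p n → GaloisField p n)
    (a : ℕ → ℕ → GaloisField p n)
    (hDO : ∀ x, FDO x = ∑ i ∈ Finset.range n, ∑ j ∈ Finset.range n,
      if i ≤ j then a i j * x ^ (p ^ i + p ^ j) else 0)
    (e x γ : GaloisField p n) (he : ∀ k : ℕ, e ^ p ^ k = e) :
    FDO (x + e * γ)
      = FDO x + e * (FDO (x + γ) - FDO x) + (e ^ 2 - e) * FDO γ := by
  rw [hDO, hDO, hDO, hDO]
  rw [← Finset.sum_sub_distrib, Finset.mul_sum, Finset.mul_sum,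
    ← Finset.sum_add_distrib, ← Finset.sum_add_distrib]
  refine Finset.sum_congr rfl fun i _ => ?_
  rw [← Finset.sum_sub_distrib, Finset.mul_sum, Finset.mul_sum,
    ← Finset.sum_add_distrib, ← Finset.sum_add_distrib]
  refine Finset.sum_congr rfl fun j _ => ?_
  by_cases h : i ≤ j
  · simp only [if_pos h]
    rw [mon_expand i j e x γ he]
    ring
  · simp only [if_neg h]
    ring

end Aux

/-- For a quadratic function `F = F_DO + F_ℓ + F(0)` with `F_DO` a Dembowski–Ostrom
polynomial and `F_ℓ` linear, and `H(x) = x + ε(x)·γ` with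
`ε(x) = Tr(αx + βF(x))`, one has
`F(H(x)) = F(x) + ε(x)·D_γF(x) + F_DO(γ)·(ε(x)² - ε(x))`. -/
theorem quadratic_compose_twist
    (p n : ℕ) [Fact p.Prime]
    (F FDO Fl : GaloisField p n → GaloisField p n)
    (a : ℕ → ℕ → GaloisField p n)
    (hDO : ∀ x, FDO x = ∑ i ∈ Finset.range n, ∑ j ∈ Finset.range n,
      if i ≤ j then a i j * x ^ (p ^ i + p ^ j) else 0)
    (hFl : IsLinearMap (ZMod p) Fl)
    (hF : ∀ x, F x = FDO x + Fl x + F 0)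
    (α β γ : GaloisField p n) :
    ∀ x : GaloisField p n,
      F (x + Algebra.trace (ZMod p) (GaloisField p n) (α * x + β * F x) • γ)
        = F x
          + Algebra.trace (ZMod p) (GaloisField p n) (α * x + β * F x) • (F (x + γ) - F x)
          + ((Algebra.trace (ZMod p) (GaloisField p n) (α * x + β * F x)) ^ 2
              - Algebra.trace (ZMod p) (GaloisField p n) (α * x + β * F x)) • FDO γ := by
  intro x
  set ε : ZMod p := Algebra.trace (ZMod p) (GaloisField p n) (α * x + β * F x) with hε
  set e : GaloisField p n := algebraMap (ZMod p) (GaloisField p n) ε with hee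
  have he : ∀ k : ℕ, e ^ p ^ k = e := by
    intro k
    rw [hee, ← map_pow, ZMod.pow_card_pow]
  have hsm : ∀ z : GaloisField p n, ε • z = e * z := fun z => Algebra.smul_def ε z
  have hsm2 : ∀ z : GaloisField p n, (ε ^ 2 - ε) • z = (e ^ 2 - e) * z := by
    intro z
    rw [Algebra.smul_def, map_sub, map_pow]
  rw [hsm, hsm, hsm2]
  have hFle : Fl (x + e * γ) = Fl x + e * Fl γ := by
    rw [← hsm, ← hsm, hFl.map_add, hFl.map_smul]
  rw [hF (x + e * γ), hF x, hF (x + γ), hFle, hFl.map_add x γ,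
    fdo_expand FDO a hDO e x γ he]
  ring
end

section
/- Let F : F_{p^n} → F_{p^n} be a quadratic function, β, γ ∈ F_{p^n}, and define F₃(x) = Tr(βF(x))·D_γF(x), where D_γF(x) = F(x+γ) - F(x) and Tr(βF(x)) ∈ F_p acts by scalar multiplication. Then for any γ₁, γ₂, γ₃ ∈ F_{p^n}, the third-order derivative D_{γ₃}D_{γ₂}D_{γ₁}F₃(x) is constant in x and equals Tr(βL_{γ₂}(γ₃))·L_γ(γ₁) + Tr(βL_{γ₁}(γ₃))·L_γ(γ₂) + Tr(βL_{γ₁}(γ₂))·L_γ(γ₃), where L_δ(x) = F(x+δ) - F(x) - F(δ) + F(0). -/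
/-- Discrete derivative. -/
def DD {V W : Type*} [AddCommGroup V] [AddCommGroup W] (δ : V) (G : V → W) : V → W :=
  fun x => G (x + δ) - G x

/-- A function has algebraic degree at most `d` iff all `(d+1)`-fold discrete
derivatives vanish identically. -/
def degLE {V W : Type*} [AddCommGroup V] [AddCommGroup W] : (V → W) → ℕ → Prop
  | F, 0 => ∀ γ x, F (x + γ) - F x = 0
  | F, (d + 1) => ∀ γ, degLE (fun x => F (x + γ) - F x) d

/-- Third derivative of `F₃(x) = Tr(βF(x))·D_γF(x)` for quadratic `F`. -/
theorem third_derivative_of_F3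
    (p n : ℕ) [Fact p.Prime]
    (F : GaloisField p n → GaloisField p n)
    (hquad : degLE F 2 ∧ ¬ degLE F 1)
    (β γ : GaloisField p n) :
    ∀ γ₁ γ₂ γ₃ x : GaloisField p n,
      DD γ₃ (DD γ₂ (DD γ₁
        (fun y => Algebra.trace (ZMod p) (GaloisField p n) (β * F y) • (F (y + γ) - F y)))) x
      = Algebra.trace (ZMod p) (GaloisField p n) (β * (F (γ₃ + γ₂) - F γ₃ - (F γ₂ - F 0)))
          • (F (γ₁ + γ) - F γ₁ - (F γ - F 0))
        + Algebra.trace (ZMod p) (GaloisField p n) (β * (F (γ₃ + γ₁) - F γ₃ - (F γ₁ - F 0)))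
          • (F (γ₂ + γ) - F γ₂ - (F γ - F 0))
        + Algebra.trace (ZMod p) (GaloisField p n) (β * (F (γ₂ + γ₁) - F γ₂ - (F γ₁ - F 0)))
          • (F (γ₃ + γ) - F γ₃ - (F γ - F 0)) := by
  obtain ⟨h2, -⟩ := hquad
  have key : ∀ a b y : GaloisField p n,
      F (y + a + b) - F (y + a) - F (y + b) + F y = F (a + b) - F a - F b + F 0 := by
    intro a b y
    have h1 := h2 a b y 0
    simp only [degLE, zero_add] at h1
    rw [sub_eq_zero] at h1
    rw [show y+b+a = y+a+b from by ring, show b+a = a+b from add_comm b a] at h1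
    linear_combination h1
  set Q : GaloisField p n → GaloisField p n → GaloisField p n :=
    fun a b => F (a + b) - F a - F b + F 0 with hQdef
  have hF : ∀ y a, F (y + a) = F y + F a - F 0 + Q y a := by
    intro y a; simp only [hQdef]; ring
  have hQadd : ∀ y c a, Q (y + c) a = Q y a + Q c a := by
    intro y c a; simp only [hQdef]; linear_combination key c a y
  have hQsymm : ∀ a b, Q a b = Q b a := by
    intro a b; simp only [hQdef]; rw [add_comm]; ring
  intro γ₁ γ₂ γ₃ x
  simp only [DD, hF, hQadd, hQsymm γ₃ γ₂, hQsymm γ₃ γ₁, hQsymm γ₂ γ₁,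
    hQsymm γ₁ γ, hQsymm γ₂ γ, hQsymm γ₃ γ, hQsymm x γ]
  simp only [Algebra.smul_def, mul_add, mul_sub, map_add, map_sub]
  ring
end

section
/- Let p be an odd prime, F : F_{p^n} → F_{p^n} quadratic, β ∈ F_{p^n}, and F₄(x) = Tr(βF(x))², viewed as an F_p-valued function. Then for any γ, γ₁, γ₂, γ₃ ∈ F_{p^n}: (1/2)·D_{γ₃}D_{γ₂}D_{γ₁}D_γ F₄(x) = Tr(βL_{γ₂}(γ₃))Tr(βL_γ(γ₁)) + Tr(βL_{γ₁}(γ₃))Tr(βL_γ(γ₂)) + Tr(βL_{γ₁}(γ₂))Tr(βL_γ(γ₃)), independently of x, where L_δ(x) = F(x+δ) - F(x) - F(δ) + F(0). -/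
/-- Fourth derivative of `F₄(x) = Tr(βF(x))²` for quadratic `F` over odd characteristic. -/
theorem fourth_derivative_of_F4
    (p n : ℕ) [Fact p.Prime] (hp : p ≠ 2)
    (F : GaloisField p n → GaloisField p n)
    (hquad : degLE F 2 ∧ ¬ degLE F 1)
    (β : GaloisField p n) :
    ∀ γ γ₁ γ₂ γ₃ x : GaloisField p n,
      (2 : ZMod p)⁻¹ *
        DD γ₃ (DD γ₂ (DD γ₁ (DD γ
          (fun y => (Algebra.trace (ZMod p) (GaloisField p n) (β * F y)) ^ 2)))) x
      = Algebra.trace (ZMod p) (GaloisField p n) (β * (F (γ₃ + γ₂) - F γ₃ - (F γ₂ - F 0)))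
          * Algebra.trace (ZMod p) (GaloisField p n) (β * (F (γ₁ + γ) - F γ₁ - (F γ - F 0)))
        + Algebra.trace (ZMod p) (GaloisField p n) (β * (F (γ₃ + γ₁) - F γ₃ - (F γ₁ - F 0)))
          * Algebra.trace (ZMod p) (GaloisField p n) (β * (F (γ₂ + γ) - F γ₂ - (F γ - F 0)))
        + Algebra.trace (ZMod p) (GaloisField p n) (β * (F (γ₂ + γ₁) - F γ₂ - (F γ₁ - F 0)))
          * Algebra.trace (ZMod p) (GaloisField p n) (β * (F (γ₃ + γ) - F γ₃ - (F γ - F 0))) := by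
  obtain ⟨h2deg, -⟩ := hquad
  have hF : ∀ x a b : GaloisField p n,
      F (x + a + b) = F (x + a) + F (x + b) - F x + (F (a + b) - F a - F b + F 0) := by
    intro x a b
    have h := h2deg b a x 0
    simp only [zero_add] at h
    linear_combination h
  set T := Algebra.trace (ZMod p) (GaloisField p n) with hT
  have Hq : ∀ x a b : GaloisField p n,
      T (β * F (x + a + b)) = T (β * F (x + a)) + T (β * F (x + b)) - T (β * F x)
        + (T (β * F (a + b)) - T (β * F a) - T (β * F b) + T (β * F 0)) := by
    intro x a b
    rw [hF x a b]
    simp only [mul_add, mul_sub, map_add, map_sub]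
  have hTr : ∀ u v w : GaloisField p n,
      T (β * (F u - F v - (F w - F 0))) = T (β * F u) - T (β * F v) - (T (β * F w) - T (β * F 0)) := by
    intro u v w
    simp only [mul_sub, map_sub]
  have h2 : (2 : ZMod p) ≠ 0 := by
    intro h
    have h' : ((2 : ℕ) : ZMod p) = 0 := by exact_mod_cast h
    have := (ZMod.natCast_eq_zero_iff 2 p).mp h'
    rcases (Nat.prime_two.eq_one_or_self_of_dvd p this) with h1 | h1
    · exact (Fact.out : p.Prime).one_lt.ne' h1
    · exact hp h1
  intro γ γ₁ γ₂ γ₃ x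
  rw [hTr, hTr, hTr, hTr, hTr, hTr]
  have key : DD γ₃ (DD γ₂ (DD γ₁ (DD γ (fun y => (T (β * F y)) ^ 2)))) x
      = 2 * ((T (β * F (γ₃ + γ₂)) - T (β * F γ₃) - (T (β * F γ₂) - T (β * F 0)))
          * (T (β * F (γ₁ + γ)) - T (β * F γ₁) - (T (β * F γ) - T (β * F 0)))
        + (T (β * F (γ₃ + γ₁)) - T (β * F γ₃) - (T (β * F γ₁) - T (β * F 0)))
          * (T (β * F (γ₂ + γ)) - T (β * F γ₂) - (T (β * F γ) - T (β * F 0)))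
        + (T (β * F (γ₂ + γ₁)) - T (β * F γ₂) - (T (β * F γ₁) - T (β * F 0)))
          * (T (β * F (γ₃ + γ)) - T (β * F γ₃) - (T (β * F γ) - T (β * F 0)))) := by
    simp only [DD]
    simp only [Hq]
    rw [show γ₁ + γ = γ + γ₁ from add_comm _ _, show γ₂ + γ = γ + γ₂ from add_comm _ _,
        show γ₃ + γ = γ + γ₃ from add_comm _ _, show γ₂ + γ₁ = γ₁ + γ₂ from add_comm _ _,
        show γ₃ + γ₁ = γ₁ + γ₃ from add_comm _ _, show γ₃ + γ₂ = γ₂ + γ₃ from add_comm _ _]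
    ring
  rw [key, inv_mul_cancel_left₀ h2]
end

section
/- Let F : F_{p^n} → F_{p^n} be quadratic with n ≥ 4. Suppose every nonzero component function Tr(bF) (b ≠ 0) is non-constant up to affine terms in the sense that |W_{Tr(bF)}| < p^n (equivalently, the linear kernel of Tr(bF) has dimension < n for every b ≠ 0), and that the differential uniformity satisfies Δ_F ≤ p^{n-3}. Then for any β ∈ F_{p^n} with β ≠ 0, any γ ∈ F_{p^n} with γ ≠ 0, and any α ∈ F_{p^n}, the function x ↦ Tr(αx + βF(x))·D_γF(x) has algebraic degree exactly 3. -/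
section auxlemmas

variable {V W W' : Type*} [AddCommGroup V] [AddCommGroup W] [AddCommGroup W']

theorem degLE_congr {F : V → W} {d : ℕ} (hF : degLE F d) {G : V → W}
    (h : ∀ x, F x = G x) : degLE G d := by
  have hFG : F = G := funext h
  exact hFG ▸ hF

theorem degLE_zero_fn : ∀ d : ℕ, degLE (fun _ : V => (0 : W)) d
  | 0 => fun _ _ => by simp
  | d + 1 => fun γ => degLE_congr (degLE_zero_fn d) (fun x => by simp)

theorem degLE_const (c : W) : degLE (fun _ : V => c) 0 := fun _ _ => sub_self c

theorem degLE_add {d : ℕ} {F G : V → W} (hF : degLE F d) (hG : degLE G d) :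
    degLE (fun x => F x + G x) d := by
  induction d generalizing F G with
  | zero =>
      intro γ x
      show F (x + γ) + G (x + γ) - (F x + G x) = 0
      have h1 := hF γ x
      have h2 := hG γ x
      rw [sub_eq_zero] at h1 h2 ⊢
      rw [h1, h2]
  | succ d ih =>
      intro γ
      refine degLE_congr (ih (hF γ) (hG γ)) (fun x => ?_)
      show (F (x + γ) - F x) + (G (x + γ) - G x)
          = F (x + γ) + G (x + γ) - (F x + G x)
      abel

theorem degLE_comp (φ : W →+ W') {d : ℕ} {F : V → W} (hF : degLE F d) :
    degLE (fun x => φ (F x)) d := by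
  induction d generalizing F with
  | zero =>
      intro γ x
      show φ (F (x + γ)) - φ (F x) = 0
      rw [← map_sub, hF γ x, map_zero]
  | succ d ih =>
      intro γ
      refine degLE_congr (ih (hF γ)) (fun x => ?_)
      show φ (F (x + γ) - F x) = φ (F (x + γ)) - φ (F x)
      exact map_sub φ _ _

theorem degLE_succ_of {d : ℕ} {F : V → W} (hF : degLE F d) : degLE F (d + 1) := by
  induction d generalizing F with
  | zero =>
      intro γ
      exact degLE_congr (degLE_zero_fn 0) (fun x => (hF γ x).symm)
  | succ d ih =>
      intro γ
      exact ih (hF γ)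

theorem degLE_of_le {d e : ℕ} (h : d ≤ e) {F : V → W} (hF : degLE F d) : degLE F e := by
  induction h with
  | refl => exact hF
  | step _ ih => exact degLE_succ_of ih

theorem degLE_shift {d : ℕ} {F : V → W} (hF : degLE F d) (c : V) :
    degLE (fun x => F (x + c)) d := by
  induction d generalizing F with
  | zero =>
      intro γ x
      show F (x + γ + c) - F (x + c) = 0
      rw [add_right_comm x γ c]
      exact hF γ (x + c)
  | succ d ih =>
      intro γ
      refine degLE_congr (ih (hF γ)) (fun x => ?_)
      show F (x + c + γ) - F (x + c) = F (x + γ + c) - F (x + c)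
      rw [add_right_comm x γ c]

theorem degLE_smul_const {R M : Type*} [Ring R] [AddCommGroup M] [Module R M]
    {d : ℕ} {f : V → R} (hf : degLE f d) (c : M) :
    degLE (fun x => f x • c) d := by
  induction d generalizing f with
  | zero =>
      intro γ x
      show f (x + γ) • c - f x • c = 0
      rw [← sub_smul, hf γ x, zero_smul]
  | succ d ih =>
      intro γ
      refine degLE_congr (ih (hf γ)) (fun x => ?_)
      show (f (x + γ) - f x) • c = f (x + γ) • c - f x • c
      exact sub_smul _ _ c

theorem degLE_const_smul {R M : Type*} [Ring R] [AddCommGroup M] [Module R M]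
    (r : R) {d : ℕ} {g : V → M} (hg : degLE g d) :
    degLE (fun x => r • g x) d := by
  induction d generalizing g with
  | zero =>
      intro γ x
      show r • g (x + γ) - r • g x = 0
      rw [← smul_sub, hg γ x, smul_zero]
  | succ d ih =>
      intro γ
      refine degLE_congr (ih (hg γ)) (fun x => ?_)
      show r • (g (x + γ) - g x) = r • g (x + γ) - r • g x
      exact smul_sub r _ _

theorem degLE_smul {R M : Type*} [Ring R] [AddCommGroup M] [Module R M] :
    ∀ (m k : ℕ) (f : V → R) (g : V → M), degLE f m → degLE g k →
      degLE (fun x => f x • g x) (m + k) := by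
  intro m
  induction m with
  | zero =>
      intro k f g hf hg
      have hfc : ∀ x, f x = f 0 := by
        intro x
        have h := hf x 0
        rw [zero_add, sub_eq_zero] at h
        exact h
      rw [Nat.zero_add]
      exact degLE_congr (degLE_const_smul (f 0) hg) (fun x => by rw [hfc x])
  | succ m ihm =>
      intro k
      induction k with
      | zero =>
          intro f g hf hg
          have hgc : ∀ x, g x = g 0 := by
            intro x
            have h := hg x 0
            rw [zero_add, sub_eq_zero] at h
            exact h
          exact degLE_congr (degLE_smul_const hf (g 0)) (fun x => by rw [hgc x])
      | succ k ihk =>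
          intro f g hf hg γ
          have h1 : degLE (fun x => (f (x + γ) - f x) • g (x + γ)) (m + (k + 1)) :=
            ihm (k + 1) _ _ (hf γ) (degLE_shift hg γ)
          have h1' : degLE (fun x => (f (x + γ) - f x) • g (x + γ)) (m + 1 + k) := by
            have he : m + (k + 1) = m + 1 + k := by omega
            exact he ▸ h1
          have h2 : degLE (fun x => f x • (g (x + γ) - g x)) (m + 1 + k) :=
            ihk _ _ hf (hg γ)
          refine degLE_congr (degLE_add h1' h2) (fun x => ?_)
          show (f (x + γ) - f x) • g (x + γ) + f x • (g (x + γ) - g x)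
              = f (x + γ) • g (x + γ) - f x • g x
          rw [sub_smul, smul_sub]
          abel

/-- The (constant) second difference form of a quadratic function. -/
def Bform {V W : Type*} [AddCommGroup V] [AddCommGroup W] (F : V → W) (a b : V) : W :=
  F (b + a) - F b - (F a - F 0)

theorem quad_diff {F : V → W} (hF : degLE F 2) (x a b : V) :
    F (x + b + a) - F (x + b) - (F (x + a) - F x) = Bform F a b := by
  have h := hF a b x 0
  simp only [zero_add] at h
  exact sub_eq_zero.mp h

theorem Bform_add_right {F : V → W} (hF : degLE F 2) (a b c : V) :
    Bform F a (b + c) = Bform F a b + Bform F a c := by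
  have h3 := quad_diff hF b a c
  rw [← h3]
  unfold Bform
  abel

theorem third_identity {R M : Type*} [CommRing R] [AddCommGroup M] [Module R M]
    (f : V → R) (g : V → M) (φ : V → V → R) (L : V → M)
    (hf : ∀ x a b, f (x + b + a) = f (x + b) + f (x + a) - f x + φ a b)
    (hg : ∀ x c, g (x + c) = g x + L c)
    (a b c x : V) :
    (f (x + c + b + a) • g (x + c + b + a) - f (x + c + b) • g (x + c + b)
        - (f (x + c + a) • g (x + c + a) - f (x + c) • g (x + c)))
      - (f (x + b + a) • g (x + b + a) - f (x + b) • g (x + b)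
        - (f (x + a) • g (x + a) - f x • g x))
    = φ a b • L c + φ a c • L b + φ b c • L a := by
  have e4 : f (x + c + b + a) = f (x + c + b) + f (x + c + a) - f (x + c) + φ a b :=
    hf (x + c) a b
  have e1 : f (x + b + a) = f (x + b) + f (x + a) - f x + φ a b := hf x a b
  have e2 : f (x + c + a) = f (x + c) + f (x + a) - f x + φ a c := hf x a c
  have e3 : f (x + c + b) = f (x + c) + f (x + b) - f x + φ b c := hf x b c
  have g7 : g (x + c + b + a) = g (x + c + b) + L a := hg (x + c + b) a
  have g4 : g (x + b + a) = g (x + b) + L a := hg (x + b) a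
  have g5 : g (x + c + a) = g (x + c) + L a := hg (x + c) a
  have g6 : g (x + c + b) = g (x + c) + L b := hg (x + c) b
  have g1 : g (x + a) = g x + L a := hg x a
  have g2 : g (x + b) = g x + L b := hg x b
  have g3 : g (x + c) = g x + L c := hg x c
  rw [e4, g7, e1, e2, e3, g4, g5, g6, g1, g2, g3]
  module

end auxlemmas

/-- For a quadratic `F` with nonzero nonlinearity (every nonzero component function has a
proper linear kernel) and differential uniformity at most `p^{n-3}`, the product
`Tr(αx + βF(x))·D_γF(x)` has algebraic degree exactly `3`. -/
theorem product_has_degree_three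
    (p n : ℕ) [Fact p.Prime] (hn : 4 ≤ n)
    (F : GaloisField p n → GaloisField p n)
    (hquad : degLE F 2 ∧ ¬ degLE F 1)
    (hNL : ∀ b : GaloisField p n, b ≠ 0 →
      ∃ γ : GaloisField p n, ¬ ∃ c : ZMod p, ∀ x,
        Algebra.trace (ZMod p) (GaloisField p n) (b * (F (x + γ) - F x)) = c)
    (hΔ : ∀ a : GaloisField p n, a ≠ 0 → ∀ b : GaloisField p n,
      Nat.card {x : GaloisField p n | F (x + a) - F x = b} ≤ p ^ (n - 3)) :
    ∀ (β : GaloisField p n), β ≠ 0 → ∀ (γ : GaloisField p n), γ ≠ 0 →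
      ∀ (α : GaloisField p n),
        degLE (fun x => Algebra.trace (ZMod p) (GaloisField p n) (α * x + β * F x)
                • (F (x + γ) - F x)) 3
        ∧ ¬ degLE (fun x => Algebra.trace (ZMod p) (GaloisField p n) (α * x + β * F x)
                • (F (x + γ) - F x)) 2 := by
  classical
  intro β hβ γ hγ α
  obtain ⟨hF2, -⟩ := hquad
  set Tr : GaloisField p n →ₗ[ZMod p] ZMod p :=
    Algebra.trace (ZMod p) (GaloisField p n) with hTrdef
  have K1 := quad_diff hF2
  -- the second-difference identity for f(x) = Tr (αx + βF x)
  have Kf : ∀ x a b : GaloisField p n,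
      Tr (α * (x + b + a) + β * F (x + b + a))
        = Tr (α * (x + b) + β * F (x + b)) + Tr (α * (x + a) + β * F (x + a))
          - Tr (α * x + β * F x) + Tr (β * Bform F a b) := by
    intro x a b
    have h := K1 x a b
    have hsplit : α * (x + b + a) + β * F (x + b + a)
        = (α * (x + b) + β * F (x + b)) + (α * (x + a) + β * F (x + a))
          - (α * x + β * F x)
          + β * (F (x + b + a) - F (x + b) - (F (x + a) - F x)) := by ring
    rw [hsplit, h, map_add, map_sub, map_add]
  -- the first-difference identity for g(x) = D_γ F (x)
  have Kg : ∀ x c : GaloisField p n,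
      F (x + c + γ) - F (x + c) = (F (x + γ) - F x) + Bform F γ c := by
    intro x c
    have h := K1 x γ c
    linear_combination h
  constructor
  · -- upper bound: degree ≤ 3
    have ha : degLE (fun x : GaloisField p n => α * x) 2 := by
      refine degLE_of_le (show 1 ≤ 2 by norm_num) ?_
      intro γ'
      refine degLE_congr (degLE_const (α * γ')) (fun x => ?_)
      show α * γ' = α * (x + γ') - α * x
      ring
    have hb : degLE (fun x : GaloisField p n => β * F x) 2 := by
      refine degLE_congr (degLE_comp (AddMonoidHom.mulLeft β) hF2) (fun x => ?_)
      rfl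
    have h1 : degLE (fun x : GaloisField p n => α * x + β * F x) 2 := degLE_add ha hb
    have hf2 : degLE (fun x : GaloisField p n => Tr (α * x + β * F x)) 2 := by
      refine degLE_congr (degLE_comp Tr.toAddMonoidHom h1) (fun x => ?_)
      rfl
    have hg1 : degLE (fun x : GaloisField p n => F (x + γ) - F x) 1 := hF2 γ
    exact degLE_smul 2 1 _ _ hf2 hg1
  · -- lower bound: degree > 2
    intro hdeg2
    have key : ∀ a b c : GaloisField p n,
        Tr (β * Bform F a b) • Bform F γ c + Tr (β * Bform F a c) • Bform F γ b
          + Tr (β * Bform F b c) • Bform F γ a = 0 := by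
      intro a b c
      have h0 := hdeg2 a b c 0
      have hid := third_identity (fun y => Tr (α * y + β * F y))
        (fun y => F (y + γ) - F y)
        (fun a b => Tr (β * Bform F a b)) (fun c => Bform F γ c)
        Kf Kg a b c 0
      rw [← hid]
      exact h0
    -- φ is not identically zero on the β-component
    obtain ⟨u, hu⟩ := hNL β hβ
    have hv : ∃ v, Tr (β * Bform F u v) ≠ 0 := by
      by_contra h
      push_neg at h
      apply hu
      refine ⟨Tr (β * (F u - F 0)), fun x => ?_⟩
      have hK := K1 0 u x
      simp only [zero_add] at hK
      have hsplit : β * (F (x + u) - F x)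
          = β * (F u - F 0) + β * (F (x + u) - F x - (F u - F 0)) := by ring
      rw [hsplit, map_add, hK, h x, add_zero]
    obtain ⟨v, huv⟩ := hv
    -- Bγ· is determined by the pair of traces
    have det : ∀ c c' : GaloisField p n,
        Tr (β * Bform F u c) = Tr (β * Bform F u c') →
        Tr (β * Bform F v c) = Tr (β * Bform F v c') →
        Bform F γ c = Bform F γ c' := by
      intro c c' h1 h2
      have k1 := key u v c
      have k2 := key u v c'
      rw [h1, h2] at k1
      have h3 := add_right_cancel (add_right_cancel (k1.trans k2.symm))
      have h5 := congrArg (fun z => (Tr (β * Bform F u v))⁻¹ • z) h3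
      simpa only [inv_smul_smul₀ huv] using h5
    -- kernel bound
    have hker : Nat.card {x : GaloisField p n // Bform F γ x = 0} ≤ p ^ (n - 3) := by
      have h := hΔ γ hγ (F γ - F 0)
      have e : {x : GaloisField p n | Bform F γ x = 0}
          = {x : GaloisField p n | F (x + γ) - F x = F γ - F 0} := by
        ext x
        have hK := K1 0 γ x
        simp only [zero_add] at hK
        simp only [Set.mem_setOf_eq]
        rw [← hK, sub_eq_zero]
      calc Nat.card {x : GaloisField p n // Bform F γ x = 0}
          = Nat.card {x : GaloisField p n | F (x + γ) - F x = F γ - F 0} := by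
            rw [← e]; rfl
        _ ≤ p ^ (n - 3) := h
    -- additivity of Bγ·
    have Badd : ∀ b c : GaloisField p n,
        Bform F γ (b + c) = Bform F γ b + Bform F γ c := Bform_add_right hF2 γ
    let Lhom : GaloisField p n →+ GaloisField p n :=
      AddMonoidHom.mk' (fun c => Bform F γ c) Badd
    -- injection into pairs × kernel
    set ψ : GaloisField p n → ZMod p × ZMod p :=
      fun c => (Tr (β * Bform F u c), Tr (β * Bform F v c)) with hψ
    have hrep : ∀ c, ψ (Function.invFun ψ (ψ c)) = ψ c :=
      fun c => Function.invFun_eq ⟨c, rfl⟩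
    have hLrep : ∀ c, Bform F γ (c - Function.invFun ψ (ψ c)) = 0 := by
      intro c
      have h1 := hrep c
      have h2 : Bform F γ c = Bform F γ (Function.invFun ψ (ψ c)) :=
        det _ _ (congrArg Prod.fst h1).symm (congrArg Prod.snd h1).symm
      have h4 : Bform F γ (c - Function.invFun ψ (ψ c))
          = Bform F γ c - Bform F γ (Function.invFun ψ (ψ c)) :=
        map_sub Lhom c _
      rw [h4, h2, sub_self]
    have hinj : Function.Injective (fun c : GaloisField p n =>
        ((ψ c, ⟨c - Function.invFun ψ (ψ c), hLrep c⟩) :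
          (ZMod p × ZMod p) × {x : GaloisField p n // Bform F γ x = 0})) := by
      intro c c' h
      have h1 : ψ c = ψ c' := congrArg Prod.fst h
      have h2 : c - Function.invFun ψ (ψ c) = c' - Function.invFun ψ (ψ c') :=
        Subtype.ext_iff.mp (congrArg Prod.snd h)
      rw [h1] at h2
      linear_combination h2
    have hcard := Nat.card_le_card_of_injective _ hinj
    rw [Nat.card_prod, Nat.card_prod, Nat.card_zmod] at hcard
    have hV : Nat.card (GaloisField p n) = p ^ n := GaloisField.card p n (by omega)
    rw [hV] at hcard
    have hp2 : 2 ≤ p := (Fact.out : p.Prime).two_le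
    have hle : (p : ℕ) ^ n ≤ p ^ (n - 1) := by
      calc (p : ℕ) ^ n ≤ p * p * p ^ (n - 3) :=
            le_trans hcard (Nat.mul_le_mul_left _ hker)
        _ = p ^ (1 + 1 + (n - 3)) := by rw [pow_add, pow_add, pow_one]
        _ = p ^ (n - 1) := by congr 1; omega
    have hlt : (p : ℕ) ^ (n - 1) < p ^ n :=
      Nat.pow_lt_pow_right (by omega) (by omega)
    omega
end
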